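/- Let T = (V, E) be a finite tree and let (c_e)_{e ∈ E} be real numbers in [0,1]. Then ∫_{[0,1]^V} ∏_{e = {u,v} ∈ E} 𝟙{|x_u − x_v| ≤ c_e} d𝐱 ≥ ∏_{e ∈ E} c_e. -/

import Mathlib

open MeasureTheory
open scoped ENNReal

/-- The gap `|x_u − x_v|` across an undirected edge `{u,v}`. -/
noncomputable def edgeGap {V : Type*} (x : V → ℝ) : Sym2 V → ℝ :=
  Sym2.lift ⟨fun u v => |x u - x v|, fun u v => abs_sub_comm (x u) (x v)⟩

open Finset in
/-- A finite acyclic graph with an edge has a leaf. -/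
lemma exists_leaf_aux {V : Type} [Fintype V] {G : SimpleGraph V} (hA : G.IsAcyclic)
    {a b : V} (hab : G.Adj a b) :
    ∃ v u, G.Adj v u ∧ ∀ y, G.Adj v y → y = u := by
  classical
  have : Nonempty V := ⟨a⟩
  let T : Finset ℕ := (Finset.range (Fintype.card V + 1)).filter
    (fun n => ∃ (x y : V) (p : G.Walk x y), p.IsPath ∧ p.length = n)
  have h1T : (1 : ℕ) ∈ T := by
    refine Finset.mem_filter.mpr ⟨Finset.mem_range.mpr (by
      have := Fintype.card_pos (α := V); omega), a, b, SimpleGraph.Walk.cons hab SimpleGraph.Walk.nil,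
      ?_, rfl⟩
    simp [SimpleGraph.Walk.cons_isPath_iff, hab.ne]
  have hTne : T.Nonempty := ⟨1, h1T⟩
  obtain ⟨hmemrange, x, y, p, hp, hlen⟩ := Finset.mem_filter.mp (T.max'_mem hTne)
  have hmax : ∀ {x' y' : V} (q : G.Walk x' y'), q.IsPath → q.length ≤ T.max' hTne := by
    intro x' y' q hq
    refine T.le_max' _ (Finset.mem_filter.mpr ⟨Finset.mem_range.mpr ?_, x', y', q, hq, rfl⟩)
    have := hq.length_lt
    omega
  have h1n : 1 ≤ T.max' hTne := T.le_max' 1 h1T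
  have hxy : x ≠ y := by
    rintro rfl
    rw [SimpleGraph.Walk.isPath_iff_eq_nil] at hp
    subst hp; simp at hlen; omega
  obtain ⟨w, hyw, q, hq⟩ := SimpleGraph.Walk.exists_eq_cons_of_ne (Ne.symm hxy) p.reverse
  have hp_eq : p = q.reverse.concat hyw.symm := by
    have h2 := congrArg SimpleGraph.Walk.reverse hq
    rwa [SimpleGraph.Walk.reverse_reverse, SimpleGraph.Walk.reverse_cons] at h2
  refine ⟨y, w, hyw, fun z hyz => ?_⟩
  by_cases hz : z ∈ p.support
  · -- z on the path: last edge of p is (z, y)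
    have hq₂ := hp.takeUntil hz
    have hyns : y ∉ (p.takeUntil z hz).support := by
      intro hy
      have hnd := hp.support_nodup
      rw [← SimpleGraph.Walk.take_spec p hz, SimpleGraph.Walk.support_append] at hnd
      have hdisj := List.disjoint_of_nodup_append hnd
      have hy2 : y ∈ (p.dropUntil z hz).support := SimpleGraph.Walk.end_mem_support _
      rw [SimpleGraph.Walk.support_eq_cons] at hy2
      rcases List.mem_cons.mp hy2 with h | h
      · exact hyz.ne h
      · exact hdisj hy h
    have hp'' : ((p.takeUntil z hz).concat hyz.symm).IsPath := by
      rw [← SimpleGraph.Walk.isPath_reverse_iff, SimpleGraph.Walk.reverse_concat]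
      exact (hq₂.reverse).cons (by simpa [SimpleGraph.Walk.support_reverse] using hyns)
    have hpeq2 : p = (p.takeUntil z hz).concat hyz.symm := by
      have h3 := hA.path_unique ⟨p, hp⟩ ⟨(p.takeUntil z hz).concat hyz.symm, hp''⟩
      exact congrArg Subtype.val h3
    have h4 := hp_eq.symm.trans hpeq2
    obtain ⟨hwz, -⟩ := SimpleGraph.Walk.concat_inj h4
    exact hwz.symm
  · exfalso
    have hp' : (p.concat hyz).IsPath := by
      rw [← SimpleGraph.Walk.isPath_reverse_iff, SimpleGraph.Walk.reverse_concat]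
      exact (hp.reverse).cons (by simpa [SimpleGraph.Walk.support_reverse] using hz)
    have := hmax _ hp'
    rw [SimpleGraph.Walk.length_concat, hlen] at this
    omega

/-- Leaf existence, phrased for a finset of edges. -/
lemma exists_leaf_edge {V : Type} [Fintype V] [DecidableEq V] (s : Finset (Sym2 V))
    (hnd : ∀ e ∈ s, ¬ e.IsDiag)
    (hA : (SimpleGraph.fromEdgeSet (↑s : Set (Sym2 V))).IsAcyclic) (hne : s.Nonempty) :
    ∃ v u, v ≠ u ∧ s(v, u) ∈ s ∧ ∀ e ∈ s, v ∈ e → e = s(v, u) := by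
  classical
  obtain ⟨e₁, he₁⟩ := hne
  obtain ⟨a, b, rfl⟩ : ∃ a b, s(a, b) = e₁ := by
    induction e₁ using Sym2.ind with | _ a b => exact ⟨a, b, rfl⟩
  have hab : (SimpleGraph.fromEdgeSet (↑s : Set (Sym2 V))).Adj a b := by
    rw [SimpleGraph.fromEdgeSet_adj]
    refine ⟨he₁, ?_⟩
    have := hnd _ he₁
    simpa [Sym2.mk_isDiag_iff] using this
  obtain ⟨v, u, hadj, huniq⟩ := exists_leaf_aux hA hab
  have hmem : s(v, u) ∈ s := by
    have := ((SimpleGraph.fromEdgeSet_adj _).mp hadj).1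
    simpa using this
  refine ⟨v, u, hadj.ne, hmem, ?_⟩
  intro e hes hv
  obtain ⟨a', b', rfl⟩ : ∃ a' b', s(a', b') = e := by
    induction e using Sym2.ind with | _ a' b' => exact ⟨a', b', rfl⟩
  have hndiag := hnd _ hes
  rw [Sym2.mk_isDiag_iff] at hndiag
  rcases Sym2.mem_iff.mp hv with rfl | rfl
  · have hadj' : (SimpleGraph.fromEdgeSet (↑s : Set (Sym2 V))).Adj v b' := by
      rw [SimpleGraph.fromEdgeSet_adj]; exact ⟨by simpa using hes, hndiag⟩
    rw [huniq b' hadj']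
  · have hadj' : (SimpleGraph.fromEdgeSet (↑s : Set (Sym2 V))).Adj v a' := by
      rw [SimpleGraph.fromEdgeSet_adj]
      refine ⟨by simpa [Sym2.eq_swap] using hes, Ne.symm hndiag⟩
    rw [huniq a' hadj', Sym2.eq_swap]

/-- Indicator of `[0,1]` with values in `ℝ≥0∞`. -/
noncomputable def boxI (t : ℝ) : ℝ≥0∞ := if 0 ≤ t ∧ t ≤ 1 then 1 else 0

/-- Indicator of the edge constraint with values in `ℝ≥0∞`. -/
noncomputable def eInd {V : Type*} (c : Sym2 V → ℝ) (e : Sym2 V) (x : V → ℝ) : ℝ≥0∞ :=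
  if edgeGap x e ≤ c e then 1 else 0

lemma boxI_le_one (t : ℝ) : boxI t ≤ 1 := by unfold boxI; split <;> simp

lemma eInd_le_one {V : Type*} (c : Sym2 V → ℝ) (e : Sym2 V) (x : V → ℝ) :
    eInd c e x ≤ 1 := by unfold eInd; split <;> simp

lemma measurable_boxI : Measurable boxI := by
  have : boxI = (Set.Icc (0:ℝ) 1).indicator (fun _ => (1:ℝ≥0∞)) := by
    funext t
    simp [boxI, Set.indicator_apply, Set.mem_Icc]
  rw [this]
  exact measurable_const.indicator measurableSet_Icc

lemma measurable_edgeGap {V : Type*} (e : Sym2 V) :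
    Measurable (fun x : V → ℝ => edgeGap x e) := by
  induction e using Sym2.ind with | _ a b =>
  have : (fun x : V → ℝ => edgeGap x s(a, b)) = fun x => |x a - x b| := by
    funext x; simp [edgeGap]
  rw [this]
  exact ((measurable_pi_apply a).sub (measurable_pi_apply b)).abs

lemma measurable_eInd {V : Type} (c : Sym2 V → ℝ) (e : Sym2 V) :
    Measurable (eInd c e) := by
  unfold eInd
  exact Measurable.ite (measurableSet_le (measurable_edgeGap e) measurable_const)
    measurable_const measurable_const

lemma eInd_update_not_mem {V : Type*} [DecidableEq V] {c : Sym2 V → ℝ} {e : Sym2 V} {v : V}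
    (hv : v ∉ e) (x : V → ℝ) (t : ℝ) :
    eInd c e (Function.update x v t) = eInd c e x := by
  induction e using Sym2.ind with | _ a b =>
  have ha : a ≠ v := fun h => hv (h ▸ Sym2.mem_mk_left a b)
  have hb : b ≠ v := fun h => hv (h ▸ Sym2.mem_mk_right a b)
  simp [eInd, edgeGap, Function.update_of_ne ha, Function.update_of_ne hb]
  exact if_congr Iff.rfl rfl rfl

lemma lintegral_boxI : ∫⁻ t, boxI t ∂(volume : Measure ℝ) = 1 := by
  have : boxI = (Set.Icc (0:ℝ) 1).indicator (fun _ => (1:ℝ≥0∞)) := by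
    funext t; simp [boxI, Set.indicator_apply, Set.mem_Icc]
  rw [this]
  rw [show ((fun _ => (1:ℝ≥0∞)) : ℝ → ℝ≥0∞) = (1 : ℝ → ℝ≥0∞) from rfl]
  rw [lintegral_indicator_one measurableSet_Icc, Real.volume_Icc]
  norm_num

lemma inner_bound (a c₀ : ℝ) (h0 : 0 ≤ c₀) (h1 : c₀ ≤ 1) :
    ENNReal.ofReal c₀ * boxI a ≤
      ∫⁻ t, boxI t * (if |t - a| ≤ c₀ then 1 else 0) ∂(volume : Measure ℝ) := by
  by_cases ha : 0 ≤ a ∧ a ≤ 1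
  · have hiff : ∀ t : ℝ, ((0 ≤ t ∧ t ≤ 1) ∧ |t - a| ≤ c₀) ↔
        (max 0 (a - c₀) ≤ t ∧ t ≤ min 1 (a + c₀)) := by
      intro t
      rw [abs_le, max_le_iff, le_min_iff]
      constructor
      · rintro ⟨⟨ht1, ht2⟩, ht3, ht4⟩
        exact ⟨⟨ht1, by linarith⟩, ht2, by linarith⟩
      · rintro ⟨⟨ht1, ht2⟩, ht3, ht4⟩
        exact ⟨⟨ht1, ht3⟩, by linarith, by linarith⟩
    have hset : (fun t : ℝ => boxI t * (if |t - a| ≤ c₀ then 1 else 0)) =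
        (Set.Icc (max 0 (a - c₀)) (min 1 (a + c₀))).indicator (1 : ℝ → ℝ≥0∞) := by
      funext t
      rw [Set.indicator_apply]
      simp only [Set.mem_Icc, boxI, Pi.one_apply]
      rw [if_congr (hiff t).symm rfl rfl]
      split_ifs <;> simp_all
    rw [hset, lintegral_indicator_one measurableSet_Icc, Real.volume_Icc]
    have hbox : boxI a = 1 := by simp [boxI, ha]
    rw [hbox, mul_one]
    apply ENNReal.ofReal_le_ofReal
    rcases max_cases 0 (a - c₀) with ⟨h6, h7⟩ | ⟨h6, h7⟩ <;>
      rcases min_cases 1 (a + c₀) with ⟨h8, h9⟩ | ⟨h8, h9⟩ <;>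
      rw [h6, h8] <;> linarith [ha.1, ha.2]
  · have : boxI a = 0 := by simp [boxI, ha]
    rw [this, mul_zero]
    exact zero_le

lemma measurable_boxProd {V : Type} [Fintype V] :
    Measurable (fun x : V → ℝ => ∏ w, boxI (x w)) :=
  Finset.measurable_prod _ fun w _ => measurable_boxI.comp (measurable_pi_apply w)

lemma lintegral_box {V : Type} [Fintype V] :
    ∫⁻ x, (∏ w, boxI (x w)) ∂(Measure.pi fun _ : V => (volume : Measure ℝ)) = 1 := by
  have h : (fun x : V → ℝ => ∏ w, boxI (x w)) =
      (Set.univ.pi fun _ : V => Set.Icc (0:ℝ) 1).indicator 1 := by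
    funext x
    by_cases hx : x ∈ Set.univ.pi fun _ : V => Set.Icc (0:ℝ) 1
    · rw [Set.indicator_of_mem hx]
      refine Finset.prod_eq_one fun w _ => ?_
      have := hx w (Set.mem_univ w)
      rw [Set.mem_Icc] at this
      simp [boxI, this]
    · rw [Set.indicator_of_notMem hx]
      rw [Set.mem_univ_pi] at hx
      push_neg at hx
      obtain ⟨w, hw⟩ := hx
      refine Finset.prod_eq_zero (Finset.mem_univ w) ?_
      rw [Set.mem_Icc] at hw
      simp [boxI, hw]
  rw [h, lintegral_indicator_one (MeasurableSet.univ_pi fun _ => measurableSet_Icc),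
    Measure.pi_pi]
  simp [Real.volume_Icc]

lemma measurable_F {V : Type} [Fintype V] [DecidableEq V] (c : Sym2 V → ℝ)
    (s : Finset (Sym2 V)) :
    Measurable (fun x : V → ℝ => (∏ w, boxI (x w)) * ∏ e ∈ s, eInd c e x) :=
  measurable_boxProd.mul (Finset.measurable_prod _ fun e _ => measurable_eInd c e)

lemma tree_lint {V : Type} [Fintype V] [DecidableEq V] (c : Sym2 V → ℝ) :
    ∀ s : Finset (Sym2 V), (∀ e ∈ s, ¬ e.IsDiag) →
      (SimpleGraph.fromEdgeSet (↑s : Set (Sym2 V))).IsAcyclic →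
      (∀ e ∈ s, c e ∈ Set.Icc (0:ℝ) 1) →
      ∏ e ∈ s, ENNReal.ofReal (c e) ≤
        ∫⁻ x, (∏ w, boxI (x w)) * ∏ e ∈ s, eInd c e x
          ∂(Measure.pi fun _ : V => (volume : Measure ℝ)) := by
  intro s
  induction s using Finset.strongInduction with
  | _ s ih =>
  intro hnd hA hc
  rcases s.eq_empty_or_nonempty with rfl | hne
  · simp only [Finset.prod_empty, mul_one]
    rw [lintegral_box]
  obtain ⟨v, u, hvu, he₀, huniq⟩ := exists_leaf_edge s hnd hA hne
  have hune : u ≠ v := Ne.symm hvu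
  have hs'sub : s.erase s(v, u) ⊂ s := Finset.erase_ssubset he₀
  have hnd' : ∀ e ∈ s.erase s(v, u), ¬ e.IsDiag := fun e he => hnd e (Finset.mem_of_mem_erase he)
  have hA' : (SimpleGraph.fromEdgeSet (↑(s.erase s(v, u)) : Set (Sym2 V))).IsAcyclic := by
    intro w p hp
    exact hA (p.mapLe (SimpleGraph.fromEdgeSet_mono (by
      exact_mod_cast Finset.coe_subset.mpr (Finset.erase_subset _ _)))) (hp.mapLe _)
  have hc' : ∀ e ∈ s.erase s(v, u), c e ∈ Set.Icc (0:ℝ) 1 :=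
    fun e he => hc e (Finset.mem_of_mem_erase he)
  have IH := ih _ hs'sub hnd' hA' hc'
  have hnotmem : ∀ e ∈ s.erase s(v, u), v ∉ e :=
    fun e he hv => (Finset.ne_of_mem_erase he) (huniq e (Finset.mem_of_mem_erase he) hv)
  have hc₀ := hc _ he₀
  rw [Set.mem_Icc] at hc₀
  have huerase : u ∈ Finset.univ.erase v := Finset.mem_erase.mpr ⟨hune, Finset.mem_univ u⟩
  -- the part of the integrand not involving the coordinate `v`
  set H : (V → ℝ) → ℝ≥0∞ := fun x =>
    (∏ w ∈ Finset.univ.erase v, boxI (x w)) * ∏ e ∈ s.erase s(v, u), eInd c e x with hH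
  have hHle : ∀ x, H x ≤ 1 := fun x =>
    mul_le_one' (Finset.prod_le_one' fun w _ => boxI_le_one _)
      (Finset.prod_le_one' fun e _ => eInd_le_one _ _ _)
  have hHtop : ∀ x, H x ≠ ⊤ := fun x => (lt_of_le_of_lt (hHle x) ENNReal.one_lt_top).ne
  have hFs := measurable_F c s (V := V)
  have hFs' := measurable_F c (s.erase s(v, u)) (V := V)
  have hsplit : ∀ (x : V → ℝ) (t : ℝ),
      (∏ w, boxI (Function.update x v t w)) = boxI t * ∏ w ∈ Finset.univ.erase v, boxI (x w) := by
    intro x t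
    rw [← Finset.mul_prod_erase Finset.univ _ (Finset.mem_univ v), Function.update_self]
    congr 1
    exact Finset.prod_congr rfl fun w hw => by
      rw [Function.update_of_ne (Finset.mem_erase.mp hw).1]
  have hprods' : ∀ (x : V → ℝ) (t : ℝ),
      ∏ e ∈ s.erase s(v, u), eInd c e (Function.update x v t) =
        ∏ e ∈ s.erase s(v, u), eInd c e x :=
    fun x t => Finset.prod_congr rfl fun e he => eInd_update_not_mem (hnotmem e he) x t
  have hgap : ∀ (x : V → ℝ) (t : ℝ),
      eInd c s(v, u) (Function.update x v t) = if |t - x u| ≤ c s(v, u) then 1 else 0 := by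
    intro x t
    simp only [eInd, edgeGap, Sym2.lift_mk]
    simp only [Function.update_self, Function.update_of_ne hune]
  have hFdecomp : ∀ (x : V → ℝ) (t : ℝ),
      (∏ w, boxI (Function.update x v t w)) * ∏ e ∈ s, eInd c e (Function.update x v t) =
        (boxI t * (if |t - x u| ≤ c s(v, u) then 1 else 0)) * H x := by
    intro x t
    rw [hsplit, ← Finset.mul_prod_erase s _ he₀, hgap, hprods', hH]
    ring
  have hFs'decomp : ∀ (x : V → ℝ) (t : ℝ),
      (∏ w, boxI (Function.update x v t w)) *
          ∏ e ∈ s.erase s(v, u), eInd c e (Function.update x v t) = boxI t * H x := by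
    intro x t
    rw [hsplit, hprods', hH]
    ring
  have stepA : ∫⁻ x, (∏ w, boxI (x w)) * ∏ e ∈ s.erase s(v, u), eInd c e x
      ∂(Measure.pi fun _ : V => (volume : Measure ℝ)) =
      MeasureTheory.lmarginal (fun _ : V => (volume : Measure ℝ)) (Finset.univ.erase v) H
        (fun _ => 0) := by
    rw [lintegral_eq_lmarginal_univ (μ := fun _ : V => (volume : Measure ℝ)) (fun _ : V => (0:ℝ)),
      MeasureTheory.lmarginal_erase' _ hFs' (Finset.mem_univ v)]
    congr 1
    funext x
    simp only [hFs'decomp x]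
    rw [lintegral_mul_const' (H x) _ (hHtop x), lintegral_boxI, one_mul]
  have hpt : ∀ x : V → ℝ, ENNReal.ofReal (c s(v, u)) * H x ≤
      ∫⁻ t, (fun y : V → ℝ => (∏ w, boxI (y w)) * ∏ e ∈ s, eInd c e y)
        (Function.update x v t) ∂(volume : Measure ℝ) := by
    intro x
    simp only [hFdecomp x]
    rw [lintegral_mul_const' (H x) _ (hHtop x)]
    have habs : boxI (x u) * H x = H x := by
      by_cases hxu : 0 ≤ x u ∧ x u ≤ 1
      · simp [boxI, hxu]
      · have hz : (∏ w ∈ Finset.univ.erase v, boxI (x w)) = 0 :=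
          Finset.prod_eq_zero huerase (by simp [boxI, hxu])
        simp [hH, hz]
    calc ENNReal.ofReal (c s(v, u)) * H x
        = (ENNReal.ofReal (c s(v, u)) * boxI (x u)) * H x := by
          rw [mul_assoc, habs]
      _ ≤ (∫⁻ t, boxI t * (if |t - x u| ≤ c s(v, u) then 1 else 0) ∂(volume : Measure ℝ)) * H x :=
          mul_le_mul_left (inner_bound (x u) (c s(v, u)) hc₀.1 hc₀.2) _
  have stepB : ENNReal.ofReal (c s(v, u)) *
      MeasureTheory.lmarginal (fun _ : V => (volume : Measure ℝ)) (Finset.univ.erase v) H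
        (fun _ => 0) ≤
      ∫⁻ x, (∏ w, boxI (x w)) * ∏ e ∈ s, eInd c e x
        ∂(Measure.pi fun _ : V => (volume : Measure ℝ)) := by
    rw [lintegral_eq_lmarginal_univ (μ := fun _ : V => (volume : Measure ℝ)) (fun _ : V => (0:ℝ)),
      MeasureTheory.lmarginal_erase' _ hFs (Finset.mem_univ v)]
    calc ENNReal.ofReal (c s(v, u)) *
        MeasureTheory.lmarginal (fun _ : V => (volume : Measure ℝ)) (Finset.univ.erase v) H
          (fun _ => 0)
        = MeasureTheory.lmarginal (fun _ : V => (volume : Measure ℝ)) (Finset.univ.erase v)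
            (fun x => ENNReal.ofReal (c s(v, u)) * H x) (fun _ => 0) := by
          simp only [MeasureTheory.lmarginal]
          rw [lintegral_const_mul' _ _ ENNReal.ofReal_ne_top]
      _ ≤ _ := MeasureTheory.lmarginal_mono (fun x => hpt x) _
  calc ∏ e ∈ s, ENNReal.ofReal (c e)
      = ENNReal.ofReal (c s(v, u)) * ∏ e ∈ s.erase s(v, u), ENNReal.ofReal (c e) :=
        (Finset.mul_prod_erase s _ he₀).symm
    _ ≤ ENNReal.ofReal (c s(v, u)) *
        ∫⁻ x, (∏ w, boxI (x w)) * ∏ e ∈ s.erase s(v, u), eInd c e x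
          ∂(Measure.pi fun _ : V => (volume : Measure ℝ)) := mul_le_mul_right IH _
    _ ≤ _ := by rw [stepA]; exact stepB

/-- Lower bound on the band-constraint integral over a tree:
`Int_T(c) ≥ ∏_e c_e`. -/
theorem tree_band_integral_lower {V : Type} [Fintype V] [DecidableEq V]
    (G : SimpleGraph V) [Fintype G.edgeSet] (hT : G.IsTree)
    (c : Sym2 V → ℝ) (hc : ∀ e ∈ G.edgeFinset, c e ∈ Set.Icc (0:ℝ) 1) :
    (∏ e ∈ G.edgeFinset, c e)
      ≤ ∫ x in Set.univ.pi (fun _ : V => Set.Icc (0:ℝ) 1),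
          ∏ e ∈ G.edgeFinset, (if edgeGap x e ≤ c e then (1:ℝ) else 0) := by
  classical
  have hgm : Measurable (fun x : V → ℝ =>
      ∏ e ∈ G.edgeFinset, (if edgeGap x e ≤ c e then (1:ℝ) else 0)) :=
    Finset.measurable_prod _ fun e _ =>
      Measurable.ite (measurableSet_le (measurable_edgeGap e) measurable_const)
        measurable_const measurable_const
  have hBm : MeasurableSet (Set.univ.pi fun _ : V => Set.Icc (0:ℝ) 1) :=
    MeasurableSet.univ_pi fun _ => measurableSet_Icc
  have h0 : 0 ≤ᵐ[(volume : Measure (V → ℝ)).restrict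
      (Set.univ.pi fun _ : V => Set.Icc (0:ℝ) 1)]
      fun x => ∏ e ∈ G.edgeFinset, (if edgeGap x e ≤ c e then (1:ℝ) else 0) :=
    Filter.Eventually.of_forall fun x =>
      Finset.prod_nonneg fun e _ => by split <;> norm_num
  rw [MeasureTheory.integral_eq_lintegral_of_nonneg_ae h0 hgm.aestronglyMeasurable]
  have key : ∫⁻ x, ENNReal.ofReal
        (∏ e ∈ G.edgeFinset, (if edgeGap x e ≤ c e then (1:ℝ) else 0))
        ∂((volume : Measure (V → ℝ)).restrict (Set.univ.pi fun _ : V => Set.Icc (0:ℝ) 1))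
      = ∫⁻ x, (∏ w, boxI (x w)) * ∏ e ∈ G.edgeFinset, eInd c e x
        ∂(Measure.pi fun _ : V => (volume : Measure ℝ)) := by
    rw [← MeasureTheory.lintegral_indicator hBm]
    rw [show (volume : Measure (V → ℝ)) = Measure.pi fun _ : V => (volume : Measure ℝ) from
      MeasureTheory.volume_pi]
    congr 1
    funext x
    by_cases hx : x ∈ Set.univ.pi fun _ : V => Set.Icc (0:ℝ) 1
    · rw [Set.indicator_of_mem hx]
      have hbox : (∏ w, boxI (x w)) = 1 := Finset.prod_eq_one fun w _ => by
        have := hx w (Set.mem_univ w)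
        rw [Set.mem_Icc] at this
        simp [boxI, this]
      rw [hbox, one_mul,
        ENNReal.ofReal_prod_of_nonneg (fun e _ => by split <;> norm_num)]
      exact Finset.prod_congr rfl fun e _ => by unfold eInd; split <;> simp
    · rw [Set.indicator_of_notMem hx]
      rw [Set.mem_univ_pi] at hx
      push_neg at hx
      obtain ⟨w, hw⟩ := hx
      rw [Set.mem_Icc] at hw
      have hbox : (∏ w', boxI (x w')) = 0 :=
        Finset.prod_eq_zero (Finset.mem_univ w) (by simp [boxI, hw])
      rw [hbox, zero_mul]
  rw [key]
  have hnd : ∀ e ∈ G.edgeFinset, ¬ e.IsDiag :=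
    fun e he => G.not_isDiag_of_mem_edgeSet (SimpleGraph.mem_edgeFinset.mp he)
  have hGA : (SimpleGraph.fromEdgeSet (↑G.edgeFinset : Set (Sym2 V))).IsAcyclic := by
    rw [SimpleGraph.coe_edgeFinset, SimpleGraph.fromEdgeSet_edgeSet]
    exact hT.IsAcyclic
  have hmain := tree_lint c G.edgeFinset hnd hGA hc
  have hle1 : (∫⁻ x, (∏ w, boxI (x w)) * ∏ e ∈ G.edgeFinset, eInd c e x
      ∂(Measure.pi fun _ : V => (volume : Measure ℝ))) ≤ 1 := by
    calc (∫⁻ x, (∏ w, boxI (x w)) * ∏ e ∈ G.edgeFinset, eInd c e x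
        ∂(Measure.pi fun _ : V => (volume : Measure ℝ)))
        ≤ ∫⁻ x, (∏ w, boxI (x w)) ∂(Measure.pi fun _ : V => (volume : Measure ℝ)) :=
          lintegral_mono fun x =>
            mul_le_of_le_one_right' (Finset.prod_le_one' fun e _ => eInd_le_one _ _ _)
      _ = 1 := lintegral_box
  have hne_top : (∫⁻ x, (∏ w, boxI (x w)) * ∏ e ∈ G.edgeFinset, eInd c e x
      ∂(Measure.pi fun _ : V => (volume : Measure ℝ))) ≠ ⊤ :=
    (lt_of_le_of_lt hle1 ENNReal.one_lt_top).ne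
  have h₁ : ENNReal.ofReal (∏ e ∈ G.edgeFinset, c e) ≤
      ∫⁻ x, (∏ w, boxI (x w)) * ∏ e ∈ G.edgeFinset, eInd c e x
        ∂(Measure.pi fun _ : V => (volume : Measure ℝ)) := by
    rw [ENNReal.ofReal_prod_of_nonneg (fun e he => (hc e he).1)]
    exact hmain
  calc ∏ e ∈ G.edgeFinset, c e
      = (ENNReal.ofReal (∏ e ∈ G.edgeFinset, c e)).toReal :=
        (ENNReal.toReal_ofReal (Finset.prod_nonneg fun e he => (hc e he).1)).symm
    _ ≤ _ := ENNReal.toReal_mono hne_top h₁
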